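/- No formula in the language {¬,∧,∨,□} defines 𝐈p on the class of S5 frames: consider the single-reflexive-point model M with p exactly true at w₀, and the model M' with two mutually accessible reflexive points w₀', w₁' both having p exactly true. Then for every □-formula φ, if φ is true (resp. false) at w₀ in M, then φ is true (resp. false) at both w₀' and w₁' in M'; yet 𝐈p is true at w₀ in M and not true at w₀' in M'. -/
import Mathlib


/-- Formulas of the language with ¬, ∧, ∨, □, ■, 𝐈 and ▲. -/
inductive Form : Type
  | var : ℕ → Form
  | neg : Form → Form
  | conj : Form → Form → Form
  | disj : Form → Form → Form
  | box : Form → Form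
  | bbox : Form → Form
  | ign : Form → Form
  | tri : Form → Form

/-- A Kripke model for Belnap–Dunn modal logic. -/
structure Model (W : Type) where
  R : W → W → Prop
  vp : ℕ → W → Prop
  vn : ℕ → W → Prop

mutual
  /-- support of truth -/
  def tr {W : Type} (M : Model W) : Form → W → Prop
    | .var n, w => M.vp n w
    | .neg φ, w => fa M φ w
    | .conj φ ψ, w => tr M φ w ∧ tr M ψ w
    | .disj φ ψ, w => tr M φ w ∨ tr M ψ w
    | .box φ, w => ∀ w', M.R w w' → tr M φ w'
    | .bbox φ, w => (∀ w', M.R w w' → tr M φ w') ∧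
        ∀ w₁ w₂, M.R w w₁ → M.R w w₂ → fa M φ w₁ → fa M φ w₂
    | .ign φ, w => tr M φ w ∧ (∀ w', M.R w w' → w' ≠ w → fa M φ w') ∧
        ∀ w₁ w₂, M.R w w₁ → w₁ ≠ w → M.R w w₂ → w₂ ≠ w → tr M φ w₁ → tr M φ w₂
    | .tri φ, w => (∀ w₁ w₂, M.R w w₁ → M.R w w₂ →
          (tr M φ w₁ → tr M φ w₂) ∧ (fa M φ w₁ → fa M φ w₂)) ∧
        ∀ w', M.R w w' → tr M φ w' ∨ fa M φ w'
  /-- support of falsity -/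
  def fa {W : Type} (M : Model W) : Form → W → Prop
    | .var n, w => M.vn n w
    | .neg φ, w => tr M φ w
    | .conj φ ψ, w => fa M φ w ∨ fa M ψ w
    | .disj φ ψ, w => fa M φ w ∧ fa M ψ w
    | .box φ, w => ∃ w', M.R w w' ∧ fa M φ w'
    | .bbox φ, w => (∃ w', M.R w w' ∧ fa M φ w') ∨
        ∃ w₁ w₂, M.R w w₁ ∧ M.R w w₂ ∧ tr M φ w₁ ∧ ¬ tr M φ w₂
    | .ign φ, w => fa M φ w ∨ (∃ w', M.R w w' ∧ w' ≠ w ∧ tr M φ w') ∨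
        ∃ w₁ w₂, (M.R w w₁ ∧ w₁ ≠ w) ∧ (M.R w w₂ ∧ w₂ ≠ w) ∧ ¬ fa M φ w₁ ∧ fa M φ w₂
    | .tri φ, w => (∃ w₁ w₂, M.R w w₁ ∧ M.R w w₂ ∧ tr M φ w₁ ∧ ¬ tr M φ w₂) ∨
        (∃ w₁ w₂, M.R w w₁ ∧ M.R w w₂ ∧ fa M φ w₁ ∧ ¬ fa M φ w₂) ∨
        (∃ w₁ w₂, M.R w w₁ ∧ M.R w w₂ ∧ tr M φ w₁ ∧ fa M φ w₂)
end

/-- φ contains an occurrence of □ -/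
def hasBox : Form → Prop
  | .var _ => False
  | .neg φ => hasBox φ
  | .conj φ ψ => hasBox φ ∨ hasBox ψ
  | .disj φ ψ => hasBox φ ∨ hasBox ψ
  | .box _ => True
  | .bbox φ => hasBox φ
  | .ign φ => hasBox φ
  | .tri φ => hasBox φ

/-- φ contains an occurrence of ■ -/
def hasBBox : Form → Prop
  | .var _ => False
  | .neg φ => hasBBox φ
  | .conj φ ψ => hasBBox φ ∨ hasBBox ψ
  | .disj φ ψ => hasBBox φ ∨ hasBBox ψ
  | .box φ => hasBBox φ
  | .bbox _ => True
  | .ign φ => hasBBox φ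
  | .tri φ => hasBBox φ

/-- φ contains an occurrence of 𝐈 -/
def hasIgn : Form → Prop
  | .var _ => False
  | .neg φ => hasIgn φ
  | .conj φ ψ => hasIgn φ ∨ hasIgn ψ
  | .disj φ ψ => hasIgn φ ∨ hasIgn ψ
  | .box φ => hasIgn φ
  | .bbox φ => hasIgn φ
  | .ign _ => True
  | .tri φ => hasIgn φ

/-- φ contains an occurrence of ▲ -/
def hasTri : Form → Prop
  | .var _ => False
  | .neg φ => hasTri φ
  | .conj φ ψ => hasTri φ ∨ hasTri ψ
  | .disj φ ψ => hasTri φ ∨ hasTri ψ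
  | .box φ => hasTri φ
  | .bbox φ => hasTri φ
  | .ign φ => hasTri φ
  | .tri _ => True

/-- validity of the sequent φ ⊢ χ on the frame (W,R) -/
def validOn {W : Type} (R : W → W → Prop) (φ χ : Form) : Prop :=
  ∀ (vp vn : ℕ → W → Prop) (w : W), tr ⟨R, vp, vn⟩ φ w → tr ⟨R, vp, vn⟩ χ w

/-- ♦φ := ¬■¬φ -/
def dia (φ : Form) : Form := .neg (.bbox (.neg φ))

/-- no {¬,∧,∨,□}-formula defines 𝐈p on S5 frames. -/
theorem box_cannot_define_ign :
    let M : Model Unit := ⟨fun _ _ => True, fun _ _ => True, fun _ _ => False⟩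
    let M' : Model Bool := ⟨fun _ _ => True, fun _ _ => True, fun _ _ => False⟩
    (∀ φ : Form, ¬ hasBBox φ → ¬ hasIgn φ → ¬ hasTri φ →
      (tr M φ () → ∀ b, tr M' φ b) ∧ (fa M φ () → ∀ b, fa M' φ b)) ∧
    tr M (.ign (.var 0)) () ∧ ¬ tr M' (.ign (.var 0)) false := by
  intro M M'
  refine ⟨?_, ?_, ?_⟩
  · intro φ
    induction φ with
    | var n => intro _ _ _; exact ⟨fun h b => h, fun h b => h⟩
    | neg φ ih =>
      intro h1 h2 h3
      obtain ⟨a, b⟩ := ih h1 h2 h3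
      exact ⟨fun h => b h, fun h => a h⟩
    | conj φ ψ ihφ ihψ =>
      intro h1 h2 h3
      simp only [hasBBox, hasIgn, hasTri, not_or] at h1 h2 h3
      obtain ⟨a1, b1⟩ := ihφ h1.1 h2.1 h3.1
      obtain ⟨a2, b2⟩ := ihψ h1.2 h2.2 h3.2
      constructor
      · rintro ⟨x, y⟩ b; exact ⟨a1 x b, a2 y b⟩
      · rintro (x | y) b
        · exact Or.inl (b1 x b)
        · exact Or.inr (b2 y b)
    | disj φ ψ ihφ ihψ =>
      intro h1 h2 h3
      simp only [hasBBox, hasIgn, hasTri, not_or] at h1 h2 h3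
      obtain ⟨a1, b1⟩ := ihφ h1.1 h2.1 h3.1
      obtain ⟨a2, b2⟩ := ihψ h1.2 h2.2 h3.2
      constructor
      · rintro (x | y) b
        · exact Or.inl (a1 x b)
        · exact Or.inr (a2 y b)
      · rintro ⟨x, y⟩ b; exact ⟨b1 x b, b2 y b⟩
    | box φ ih =>
      intro h1 h2 h3
      obtain ⟨a, b⟩ := ih h1 h2 h3
      constructor
      · intro h c b' _; exact a (h () trivial) b'
      · rintro ⟨w', _, hf⟩ c; exact ⟨c, trivial, b hf c⟩
    | bbox φ ih => intro h1; exact absurd trivial h1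
    | ign φ ih => intro _ h2; exact absurd trivial h2
    | tri φ ih => intro _ _ h3; exact absurd trivial h3
  · refine ⟨trivial, ?_, ?_⟩
    · intro w' _ hne; exact absurd rfl hne
    · intro w₁ w₂ _ hne; exact absurd rfl hne
  · rintro ⟨_, h, _⟩
    exact h true trivial (by simp)
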